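/- Under assumptions A1–A3, the equation θ̂ + b(θ̂) = E[θ | θ ≥ θ̂] has a unique solution θ̂ in (θ̲, θ̄). -/

import Mathlib

open Set Filter intervalIntegral
open Topology

/-- Under A1–A3, the equation `θ̂ + b(θ̂) = E[θ | θ ≥ θ̂]` has a unique solution in `(θ̲, θ̄)`. -/
theorem stmt_6 (θl θu : ℝ) (hθ : θl < θu)
    (f b b' B g : ℝ → ℝ)
    (hf : ContinuousOn f (Icc θl θu)) (hfpos : ∀ θ ∈ Icc θl θu, 0 < f θ)
    (hfdens : (∫ θ in θl..θu, f θ) = 1)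
    (hb : ∀ θ ∈ Icc θl θu, HasDerivAt b (b' θ) θ)
    (hb'cont : ContinuousOn b' (Icc θl θu))
    (hb' : ∀ θ ∈ Icc θl θu, -1 < b' θ)
    (hB : ∀ θ ∈ Icc θl θu, B θ = b θ / (1 + b' θ))
    (hg : ∀ θ ∈ Icc θl θu, HasDerivAt (fun t => B t * f t) (g θ) θ)
    (hA1 : ∀ θ ∈ Icc θl θu, 0 < f θ + g θ)
    (hA2a : 0 ≤ b θl) (hA2b : 0 < b θu) (hA2c : 0 < ∫ θ in θl..θu, b θ * f θ)
    (hA3 : θl + b θl < ∫ θ in θl..θu, θ * f θ) :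
    ∃! t : ℝ, t ∈ Ioo θl θu ∧
      t + b t = (∫ θ in t..θu, θ * f θ) / (∫ θ in t..θu, f θ) := by
  set Fb : ℝ → ℝ := fun t => ∫ θ in t..θu, f θ with hFbdef
  set M : ℝ → ℝ := fun t => ∫ θ in t..θu, θ * f θ with hMdef
  set H : ℝ → ℝ := fun t => M t - (t + b t) * Fb t with hHdef
  set K : ℝ → ℝ := fun t => B t * f t - Fb t with hKdef
  have huIcc : uIcc θl θu = Icc θl θu := uIcc_of_le hθ.le
  have hfM : ContinuousOn (fun θ => θ * f θ) (Icc θl θu) :=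
    continuousOn_id.mul hf
  -- integrability helpers
  have hsub : ∀ t ∈ Icc θl θu, uIcc t θu ⊆ Icc θl θu := by
    intro t ht
    rw [uIcc_of_le ht.2]
    exact Icc_subset_Icc ht.1 le_rfl
  have hint : ∀ t ∈ Icc θl θu, IntervalIntegrable f MeasureTheory.volume t θu :=
    fun t ht => (hf.mono (hsub t ht)).intervalIntegrable
  have hintM : ∀ t ∈ Icc θl θu,
      IntervalIntegrable (fun θ => θ * f θ) MeasureTheory.volume t θu :=
    fun t ht => (hfM.mono (hsub t ht)).intervalIntegrable
  -- continuity of the pieces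
  have hFbCont : ContinuousOn Fb (Icc θl θu) := by
    rw [← huIcc]
    exact continuousOn_primitive_interval_left (huIcc ▸ hf.integrableOn_Icc)
  have hMCont : ContinuousOn M (Icc θl θu) := by
    rw [← huIcc]
    exact continuousOn_primitive_interval_left (huIcc ▸ hfM.integrableOn_Icc)
  have hbCont : ContinuousOn b (Icc θl θu) :=
    fun x hx => (hb x hx).continuousAt.continuousWithinAt
  have hBfCont : ContinuousOn (fun t => B t * f t) (Icc θl θu) :=
    fun x hx => (hg x hx).continuousAt.continuousWithinAt
  have hHCont : ContinuousOn H (Icc θl θu) :=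
    hMCont.sub ((continuousOn_id.add hbCont).mul hFbCont)
  have hKCont : ContinuousOn K (Icc θl θu) := hBfCont.sub hFbCont
  -- positivity of Fb on [θl, θu)
  have hFbpos : ∀ t ∈ Ico θl θu, 0 < Fb t := by
    intro t ht
    refine intervalIntegral_pos_of_pos_on (hint t ⟨ht.1, ht.2.le⟩) ?_ ht.2
    intro x hx
    exact hfpos x ⟨ht.1.trans hx.1.le, hx.2.le⟩
  have h1b' : ∀ θ ∈ Icc θl θu, 0 < 1 + b' θ := by
    intro θ hθ'; linarith [hb' θ hθ']
  -- values at endpoints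
  have hFbθu : Fb θu = 0 := integral_same
  have hMθu : M θu = 0 := integral_same
  have hHθu : H θu = 0 := by simp [hHdef, hFbθu, hMθu]
  have hHθl : 0 < H θl := by
    have : Fb θl = 1 := hfdens
    simp only [hHdef, this, mul_one]
    linarith
  have hKθu : 0 < K θu := by
    have h1 : 0 < 1 + b' θu := h1b' θu (right_mem_Icc.2 hθ.le)
    have : K θu = b θu / (1 + b' θu) * f θu := by
      simp [hKdef, hFbθu, hB θu (right_mem_Icc.2 hθ.le)]
    rw [this]
    exact mul_pos (div_pos hA2b h1) (hfpos θu (right_mem_Icc.2 hθ.le))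
  -- derivatives at interior points
  have hFb' : ∀ x ∈ Ioo θl θu, HasDerivAt Fb (-(f x)) x := by
    intro x hx
    have hxI : x ∈ Icc θl θu := Ioo_subset_Icc_self hx
    refine integral_hasDerivAt_left (hint x hxI) ?_ ?_
    · exact (hf.mono Ioo_subset_Icc_self).stronglyMeasurableAtFilter isOpen_Ioo x hx
    · exact hf.continuousAt (Icc_mem_nhds hx.1 hx.2)
  have hM' : ∀ x ∈ Ioo θl θu, HasDerivAt M (-(x * f x)) x := by
    intro x hx
    have hxI : x ∈ Icc θl θu := Ioo_subset_Icc_self hx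
    refine integral_hasDerivAt_left (hintM x hxI) ?_ ?_
    · exact (hfM.mono Ioo_subset_Icc_self).stronglyMeasurableAtFilter isOpen_Ioo x hx
    · exact hfM.continuousAt (Icc_mem_nhds hx.1 hx.2)
  have hK' : ∀ x ∈ Ioo θl θu, HasDerivAt K (f x + g x) x := by
    intro x hx
    have : HasDerivAt (fun t => B t * f t - Fb t) (g x - -(f x)) x :=
      (hg x (Ioo_subset_Icc_self hx)).sub (hFb' x hx)
    simpa [hKdef, sub_neg_eq_add, add_comm] using this
  have hbeq : ∀ x ∈ Icc θl θu, b x = B x * (1 + b' x) := by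
    intro x hx
    rw [hB x hx, div_mul_cancel₀]
    exact (h1b' x hx).ne'
  have hH' : ∀ x ∈ Ioo θl θu, HasDerivAt H ((1 + b' x) * K x) x := by
    intro x hx
    have hxI : x ∈ Icc θl θu := Ioo_subset_Icc_self hx
    have h2 : HasDerivAt (fun t => (t + b t) * Fb t)
        ((1 + b' x) * Fb x + (x + b x) * -(f x)) x :=
      (((hasDerivAt_id x).add (hb x hxI)).mul (hFb' x hx))
    have h3 : HasDerivAt (fun t => M t - (t + b t) * Fb t)
        (-(x * f x) - ((1 + b' x) * Fb x + (x + b x) * -(f x))) x := (hM' x hx).sub h2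
    convert h3 using 1
    simp only [hKdef]
    rw [hbeq x hxI]
    ring
  -- K is strictly increasing on Icc
  have hKmono : StrictMonoOn K (Icc θl θu) := by
    refine strictMonoOn_of_deriv_pos (convex_Icc θl θu) hKCont ?_
    intro x hx
    rw [interior_Icc] at hx
    rw [(hK' x hx).deriv]
    exact hA1 x (Ioo_subset_Icc_self hx)
  -- equation ↔ H = 0
  have hEq : ∀ t ∈ Ioo θl θu,
      (t + b t = M t / Fb t ↔ H t = 0) := by
    intro t ht
    have hpos := hFbpos t ⟨ht.1.le, ht.2⟩
    rw [eq_div_iff hpos.ne', hHdef]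
    constructor <;> intro h <;> simp only at h ⊢ <;> linarith
  -- existence of s ∈ (θl, θu) with 0 < K s
  obtain ⟨s, hs, hKs⟩ : ∃ s ∈ Ioo θl θu, 0 < K s := by
    have hct : ContinuousWithinAt K (Ioo θl θu) θu :=
      (hKCont θu (right_mem_Icc.2 hθ.le)).mono Ioo_subset_Icc_self
    have hev : ∀ᶠ x in 𝓝[Ioo θl θu] θu, 0 < K x :=
      hct.eventually_const_lt hKθu
    have hmem : ∀ᶠ x in 𝓝[Ioo θl θu] θu, x ∈ Ioo θl θu :=
      eventually_mem_nhdsWithin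
    have : NeBot (𝓝[Ioo θl θu] θu) := right_nhdsWithin_Ioo_neBot hθ
    obtain ⟨s, h1, h2⟩ := (hmem.and hev).exists
    exact ⟨s, h1, h2⟩
  -- H s < 0
  have hHs : H s < 0 := by
    have hmono : StrictMonoOn H (Icc s θu) := by
      refine strictMonoOn_of_deriv_pos (convex_Icc s θu)
        (hHCont.mono (Icc_subset_Icc hs.1.le le_rfl)) ?_
      intro x hx
      rw [interior_Icc] at hx
      have hxI : x ∈ Ioo θl θu := ⟨hs.1.trans hx.1, hx.2⟩
      rw [(hH' x hxI).deriv]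
      refine mul_pos (h1b' x (Ioo_subset_Icc_self hxI)) ?_
      calc (0:ℝ) < K s := hKs
        _ < K x := hKmono (Ioo_subset_Icc_self hs) (Ioo_subset_Icc_self hxI) hx.1
    have := hmono (left_mem_Icc.2 hs.2.le) (right_mem_Icc.2 hs.2.le) hs.2
    linarith [hHθu]
  -- existence of a zero of H in (θl, s)
  obtain ⟨t, ht, hHt⟩ : ∃ t ∈ Ioo θl s, H t = 0 := by
    have := intermediate_value_Ioo' (a := θl) (b := s) hs.1.le
      (hHCont.mono (Icc_subset_Icc le_rfl hs.2.le))
    obtain ⟨t, ht, h⟩ := this ⟨hHs, hHθl⟩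
    exact ⟨t, ht, h⟩
  have htIoo : t ∈ Ioo θl θu := ⟨ht.1, ht.2.trans hs.2⟩
  -- uniqueness helper: no two distinct zeros
  have huniq : ∀ t1 ∈ Ioo θl θu, ∀ t2 ∈ Ioo θl θu,
      H t1 = 0 → H t2 = 0 → t1 < t2 → False := by
    intro t1 ht1 t2 ht2 hz1 hz2 hlt
    -- mean value theorem on [t2, θu] gives c with K c = 0
    obtain ⟨c, hc, hceq⟩ := exists_hasDerivAt_eq_slope H (fun x => (1 + b' x) * K x)
      ht2.2 (hHCont.mono (Icc_subset_Icc ht2.1.le le_rfl))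
      (fun x hx => hH' x ⟨ht2.1.trans hx.1, hx.2⟩)
    have hcI : c ∈ Icc θl θu := ⟨(ht2.1.trans hc.1).le, hc.2.le⟩
    have hKc : K c = 0 := by
      have : (1 + b' c) * K c = 0 := by
        rw [hceq, hHθu, hz2]; simp
      exact (mul_eq_zero.1 this).resolve_left (h1b' c hcI).ne'
    -- H strictly decreasing on [t1, t2]
    have hanti : StrictAntiOn H (Icc t1 t2) := by
      refine strictAntiOn_of_deriv_neg (convex_Icc t1 t2)
        (hHCont.mono (Icc_subset_Icc ht1.1.le ht2.2.le)) ?_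
      intro x hx
      rw [interior_Icc] at hx
      have hxI : x ∈ Icc θl θu := ⟨(ht1.1.trans hx.1).le, (hx.2.trans ht2.2).le⟩
      rw [(hH' x ⟨ht1.1.trans hx.1, hx.2.trans ht2.2⟩).deriv]
      refine mul_neg_of_pos_of_neg (h1b' x hxI) ?_
      calc K x < K c := hKmono hxI hcI (hx.2.trans hc.1)
        _ = 0 := hKc
    have := hanti (left_mem_Icc.2 hlt.le) (right_mem_Icc.2 hlt.le) hlt
    rw [hz1, hz2] at this
    exact lt_irrefl 0 this
  refine ⟨t, ⟨htIoo, (hEq t htIoo).2 hHt⟩, ?_⟩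
  intro y ⟨hyIoo, hyeq⟩
  have hHy : H y = 0 := (hEq y hyIoo).1 hyeq
  rcases lt_trichotomy y t with h | h | h
  · exact absurd (huniq y hyIoo t htIoo hHy hHt h) not_false
  · exact h
  · exact absurd (huniq t htIoo y hyIoo hHt hHy h) not_false
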